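/- Let A, B : I → B(H) be strongly continuous with A pointwise self-adjoint. Then the unique strong solution V of V'(t) = −i[A(t), V(t)] + B(t), V(t₀) = V₀ satisfies ‖V(t)‖ ≤ ‖V₀‖ + ∫_{min(t,t₀)}^{max(t,t₀)} ‖B(s)‖ ds for all t ∈ I. -/

import Mathlib

open Set MeasureTheory Function Asymptotics Filter Topology
open scoped Interval

local notation "⟪" x ", " y "⟫" => @inner ℂ _ _ x y

section AuxLemmas
variable {H : Type*} [NormedAddCommGroup H] [NormedSpace ℂ H]

/-- Joint continuity of `(t, x) ↦ G t x` along a curve, from strong continuity plus a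
uniform bound. -/
lemma aux_joint_cont {G : ℝ → H →L[ℂ] H} {u : ℝ → H} {M : ℝ}
    (hGc : ∀ x, Continuous fun t => G t x) (hM : ∀ t, ‖G t‖ ≤ M)
    (hu : Continuous u) : Continuous fun t => G t (u t) := by
  rw [continuous_iff_continuousAt]
  intro t₀
  have key : Tendsto (fun t => ‖G t (u t) - G t₀ (u t₀)‖) (𝓝 t₀) (𝓝 0) := by
    have h1 : Tendsto (fun t => M * ‖u t - u t₀‖ + ‖G t (u t₀) - G t₀ (u t₀)‖) (𝓝 t₀) (𝓝 0) := by
      have l1 : Tendsto (fun t => ‖u t - u t₀‖) (𝓝 t₀) (𝓝 0) :=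
        tendsto_iff_norm_sub_tendsto_zero.mp (hu.tendsto t₀)
      have l2 : Tendsto (fun t => ‖G t (u t₀) - G t₀ (u t₀)‖) (𝓝 t₀) (𝓝 0) :=
        tendsto_iff_norm_sub_tendsto_zero.mp ((hGc (u t₀)).tendsto t₀)
      simpa using (l1.const_mul M).add l2
    refine squeeze_zero (fun t => norm_nonneg _) (fun t => ?_) h1
    calc ‖G t (u t) - G t₀ (u t₀)‖
        = ‖G t (u t - u t₀) + (G t (u t₀) - G t₀ (u t₀))‖ := by rw [map_sub]; abel_nf
      _ ≤ ‖G t (u t - u t₀)‖ + ‖G t (u t₀) - G t₀ (u t₀)‖ := norm_add_le _ _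
      _ ≤ M * ‖u t - u t₀‖ + ‖G t (u t₀) - G t₀ (u t₀)‖ := by
          gcongr
          exact le_trans ((G t).le_opNorm _)
            (mul_le_mul_of_nonneg_right (hM t) (norm_nonneg _))
  exact tendsto_iff_norm_sub_tendsto_zero.mpr key

/-- The operator norm of a strongly continuous family is lower semicontinuous. -/
lemma aux_norm_clm_lsc {G : ℝ → H →L[ℂ] H} (hGc : ∀ x, Continuous fun t => G t x) :
    LowerSemicontinuous fun t => ‖G t‖ := by
  intro t₀ y hy
  rcases lt_or_ge y 0 with hy0 | hy0
  · exact Eventually.of_forall fun t => hy0.trans_le (norm_nonneg _)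
  · have : ¬ ∀ x : H, ‖x‖ ≠ 0 → ‖G t₀ x‖ ≤ y * ‖x‖ := by
      intro h
      exact absurd ((G t₀).opNorm_le_bound' hy0 h) (not_le.mpr hy)
    push_neg at this
    obtain ⟨x₀, hx0, hxy0⟩ := this
    have hr : (0:ℝ) < ‖x₀‖ := lt_of_le_of_ne (norm_nonneg _) (Ne.symm hx0)
    set x : H := ‖x₀‖⁻¹ • x₀ with hxdef
    have hx1 : ‖x‖ ≤ 1 := by
      rw [hxdef, norm_smul, norm_inv, norm_norm, inv_mul_cancel₀ (ne_of_gt hr)]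
    have hxy : y < ‖G t₀ x‖ := by
      have : ‖G t₀ x‖ = ‖x₀‖⁻¹ * ‖G t₀ x₀‖ := by
        rw [hxdef, (G t₀).map_smul_of_tower, norm_smul, norm_inv, norm_norm]
      rw [this, lt_inv_mul_iff₀ hr, mul_comm]
      exact hxy0
    have hev : ∀ᶠ t in 𝓝 t₀, y < ‖G t x‖ :=
      ((hGc x).norm.continuousAt (x := t₀)) (Ioi_mem_nhds hxy)
    filter_upwards [hev] with t ht
    exact ht.trans_le ((G t).unit_le_opNorm x hx1)

/-- Strong product rule: derivative of `τ ↦ V τ (ψ τ)` when `V` is only strongly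
differentiable, assuming a local uniform bound on `‖V‖`. -/
lemma aux_strong_clm_deriv {V : ℝ → H →L[ℂ] H} {ψ : ℝ → H} {s : Set ℝ} {t : ℝ}
    {w ψ' : H} {C : ℝ}
    (hC : ∀ τ ∈ s, ‖V τ‖ ≤ C)
    (hVd : HasDerivWithinAt (fun τ => V τ (ψ t)) w s t)
    (hVc : ContinuousWithinAt (fun τ => V τ ψ') s t)
    (hψ : HasDerivWithinAt ψ ψ' s t) :
    HasDerivWithinAt (fun τ => V τ (ψ τ)) (w + V t ψ') s t := by
  rw [hasDerivWithinAt_iff_isLittleO] at hψ hVd ⊢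
  have h1 : (fun τ => V τ (ψ τ - ψ t - (τ - t) • ψ')) =o[𝓝[s] t] fun τ => τ - t := by
    refine IsBigO.trans_isLittleO ?_ hψ
    rw [isBigO_iff]
    refine ⟨C, ?_⟩
    filter_upwards [self_mem_nhdsWithin] with τ hτ
    exact le_trans ((V τ).le_opNorm _)
      (mul_le_mul_of_nonneg_right (hC τ hτ) (norm_nonneg _))
  have h2 : (fun τ => (τ - t) • (V τ ψ' - V t ψ')) =o[𝓝[s] t] fun τ => τ - t := by
    have hg : Tendsto (fun τ => V τ ψ' - V t ψ') (𝓝[s] t) (𝓝 0) := by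
      simpa using hVc.tendsto.sub_const (V t ψ')
    have ho : (fun τ => V τ ψ' - V t ψ') =o[𝓝[s] t] (fun _ => (1:ℝ)) :=
      (isLittleO_one_iff ℝ).mpr hg
    have h := (isBigO_refl (fun τ : ℝ => τ - t) (𝓝[s] t)).smul_isLittleO ho
    simpa using h
  have hsum := (h1.add h2).add hVd
  refine hsum.congr' (Eventually.of_forall fun τ => ?_) EventuallyEq.rfl
  simp only [map_sub, ContinuousLinearMap.map_smul_of_tower, smul_sub, smul_add]
  abel

end AuxLemmas

section FTC
variable {E : Type*} [NormedAddCommGroup E] [NormedSpace ℝ E] [CompleteSpace E]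

lemma aux_ftc_icc {f g : ℝ → E} {a b : ℝ} (hab : a ≤ b)
    (hf : ∀ t ∈ Icc a b, HasDerivWithinAt f (g t) (Icc a b) t)
    (hg : ContinuousOn g (Icc a b)) :
    f b - f a = ∫ t in a..b, g t := by
  have hcont : ContinuousOn f (Icc a b) := fun t ht => (hf t ht).continuousWithinAt
  rw [intervalIntegral.integral_eq_sub_of_hasDeriv_right_of_le hab hcont
    (fun x hx => ((hf x (Ioo_subset_Icc_self hx)).hasDerivAt
      (Icc_mem_nhds hx.1 hx.2)).hasDerivWithinAt)
    (hg.intervalIntegrable_of_Icc hab)]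

lemma aux_ftc_icc' {f g : ℝ → E} {a b : ℝ}
    (hf : ∀ t ∈ Icc a b, HasDerivWithinAt f (g t) (Icc a b) t)
    (hg : ContinuousOn g (Icc a b)) :
    ∀ c ∈ Icc a b, ∀ d ∈ Icc a b, f d - f c = ∫ t in c..d, g t := by
  have main : ∀ c ∈ Icc a b, ∀ d ∈ Icc a b, c ≤ d → f d - f c = ∫ t in c..d, g t := by
    intro c hc d hd hcd
    have hsub : Icc c d ⊆ Icc a b := Icc_subset_Icc hc.1 hd.2
    exact aux_ftc_icc hcd (fun t ht => ((hf t (hsub ht)).mono hsub)) (hg.mono hsub)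
  intro c hc d hd
  rcases le_total c d with h | h
  · exact main c hc d hd h
  · rw [intervalIntegral.integral_symm, ← main d hd c hc h]
    abel

end FTC

section ODE
variable {H : Type*} [NormedAddCommGroup H] [NormedSpace ℂ H] [CompleteSpace H]

/-- Global existence for the linear ODE `u' = G t (u t)` on a compact interval, for a
strongly continuous, uniformly bounded family `G`, with prescribed value at `c ∈ [a,b]`.
Proved by Picard iteration (an iterate of the Picard map is a contraction). -/
lemma aux_ode_exists {a b : ℝ} (hab : a ≤ b) (G : ℝ → H →L[ℂ] H)
    (hGc : ∀ x, Continuous fun t => G t x) {M : ℝ} (hM : ∀ t, ‖G t‖ ≤ M)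
    {c : ℝ} (hc : c ∈ Icc a b) (χ : H) :
    ∃ u : ℝ → H, Continuous u ∧ u c = χ ∧
      ∀ t ∈ Icc a b, HasDerivWithinAt u (G t (u t)) (Icc a b) t := by
  have hM0 : 0 ≤ M := le_trans (norm_nonneg _) (hM a)
  have hne : Nonempty (Icc a b) := ⟨⟨c, hc⟩⟩
  have integ : ∀ f : C(Icc a b, H), Continuous fun s => G s (IccExtend hab f s) :=
    fun f => aux_joint_cont hGc hM (f.continuous.Icc_extend')
  set T : C(Icc a b, H) → C(Icc a b, H) := fun f =>
    ⟨fun t => χ + ∫ s in c..(t:ℝ), G s (IccExtend hab f s),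
     continuous_const.add ((intervalIntegral.continuous_primitive
        (fun x y => (integ f).intervalIntegrable x y) c).comp continuous_subtype_val)⟩
    with hT
  have hTapp : ∀ (f : C(Icc a b, H)) (t : Icc a b),
      T f t = χ + ∫ s in c..(t:ℝ), G s (IccExtend hab f s) := fun f t => rfl
  have key : ∀ n : ℕ, ∀ f g : C(Icc a b, H), ∀ t : Icc a b,
      dist ((T^[n]) f t) ((T^[n]) g t)
        ≤ (M * |(t:ℝ) - c|) ^ n / n.factorial * dist f g := by
    intro n
    induction n with
    | zero => intro f g t; simpa using ContinuousMap.dist_apply_le_dist t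
    | succ n ih =>
      intro f g t
      rw [iterate_succ_apply', iterate_succ_apply']
      set F := (T^[n]) f with hF
      set Gg := (T^[n]) g with hGg
      have hsub : Ι c (t : ℝ) ⊆ Icc a b :=
        uIoc_subset_uIcc.trans (uIcc_subset_Icc hc t.2)
      have e1 : dist (T F t) (T Gg t)
          = ‖∫ s in c..(t:ℝ),
              (G s (IccExtend hab F s) - G s (IccExtend hab Gg s))‖ := by
        rw [dist_eq_norm, hTapp, hTapp,
          intervalIntegral.integral_sub ((integ F).intervalIntegrable _ _)
            ((integ Gg).intervalIntegrable _ _)]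
        congr 1
        abel
      have e2 := intervalIntegral.norm_integral_le_integral_norm_uIoc
        (f := fun s => G s (IccExtend hab F s) - G s (IccExtend hab Gg s))
        (a := c) (b := (t:ℝ)) (μ := volume)
      have e3 : ∫ s in Ι c (t:ℝ), ‖G s (IccExtend hab F s) - G s (IccExtend hab Gg s)‖
          ≤ ∫ s in Ι c (t:ℝ),
              (M ^ (n+1) * dist f g / n.factorial) * |s - c| ^ n := by
        refine setIntegral_mono_on ?_ ?_ measurableSet_uIoc ?_
        · exact ((integ F).sub (integ Gg)).norm.integrableOn_uIoc
        · exact (Continuous.mul continuous_const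
            ((continuous_id.sub continuous_const).abs.pow n)).integrableOn_uIoc
        · intro s hs
          have hmem : s ∈ Icc a b := hsub hs
          calc ‖G s (IccExtend hab F s) - G s (IccExtend hab Gg s)‖
              = ‖G s (IccExtend hab F s - IccExtend hab Gg s)‖ := by rw [map_sub]
            _ ≤ M * ‖IccExtend hab F s - IccExtend hab Gg s‖ :=
                le_trans ((G s).le_opNorm _)
                  (mul_le_mul_of_nonneg_right (hM s) (norm_nonneg _))
            _ = M * dist (F ⟨s, hmem⟩) (Gg ⟨s, hmem⟩) := by
                rw [dist_eq_norm, IccExtend_of_mem hab _ hmem, IccExtend_of_mem hab _ hmem]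
            _ ≤ M * ((M * |s - c|) ^ n / n.factorial * dist f g) := by
                have := ih f g ⟨s, hmem⟩
                exact mul_le_mul_of_nonneg_left this hM0
            _ = (M ^ (n+1) * dist f g / n.factorial) * |s - c| ^ n := by
                rw [mul_pow]; ring
      have e4 : ∫ s in Ι c (t:ℝ), (M ^ (n+1) * dist f g / n.factorial) * |s - c| ^ n
          = (M * |(t:ℝ) - c|) ^ (n+1) / (n+1).factorial * dist f g := by
        rw [MeasureTheory.integral_const_mul, integral_pow_abs_sub_uIoc,
          Nat.factorial_succ, mul_pow]
        have h1 : ((n+1).factorial : ℝ) ≠ 0 := by positivity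
        have h2 : (n.factorial : ℝ) ≠ 0 := by positivity
        field_simp
        push_cast
        ring
      calc dist (T F t) (T Gg t) ≤ _ := by rw [e1]; exact e2
        _ ≤ _ := e3
        _ = _ := e4
  have keyX : ∀ n : ℕ, ∀ f g : C(Icc a b, H),
      dist ((T^[n]) f) ((T^[n]) g) ≤ (M * (b - a)) ^ n / n.factorial * dist f g := by
    intro n f g
    have hMba : 0 ≤ M * (b - a) := mul_nonneg hM0 (by linarith)
    rw [ContinuousMap.dist_le
      (mul_nonneg (div_nonneg (pow_nonneg hMba n) (Nat.cast_nonneg _)) dist_nonneg)]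
    intro t
    refine (key n f g t).trans ?_
    have habs : |(t:ℝ) - c| ≤ b - a :=
      abs_le.mpr ⟨by linarith [t.2.1, hc.2], by linarith [t.2.2, hc.1]⟩
    gcongr
  obtain ⟨n, hn⟩ := ((FloorSemiring.tendsto_pow_div_factorial_atTop (M * (b - a))).eventually
      (gt_mem_nhds one_pos)).exists
  have hK0 : 0 ≤ (M * (b - a)) ^ n / n.factorial :=
    div_nonneg (pow_nonneg (mul_nonneg hM0 (by linarith)) n) (Nat.cast_nonneg _)
  have hlip : LipschitzWith ⟨_, hK0⟩ (T^[n]) :=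
    LipschitzWith.of_dist_le_mul fun f g => keyX n f g
  have hcontr : ContractingWith ⟨_, hK0⟩ (T^[n]) := ⟨by exact_mod_cast hn, hlip⟩
  set φ : C(Icc a b, H) := ContractingWith.fixedPoint (T^[n]) hcontr with hφ
  have hfix : T φ = φ := hcontr.isFixedPt_fixedPoint_iterate
  set u : ℝ → H := IccExtend hab φ with hu
  have hucont : Continuous u := φ.continuous.Icc_extend'
  have ueq : ∀ t ∈ Icc a b, u t = χ + ∫ s in c..t, G s (u s) := by
    intro t ht
    have h1 : T φ ⟨t, ht⟩ = φ ⟨t, ht⟩ := by rw [hfix]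
    rw [hTapp] at h1
    rw [hu, IccExtend_of_mem hab _ ht, ← h1]
  have hcon : Continuous fun s => G s (u s) := integ φ
  refine ⟨u, hucont, ?_, ?_⟩
  · rw [ueq c hc, intervalIntegral.integral_same, add_zero]
  · intro t ht
    have hFd : HasDerivAt (fun τ => χ + ∫ s in c..τ, G s (u s)) (G t (u t)) t :=
      (intervalIntegral.integral_hasDerivAt_right (hcon.intervalIntegrable _ _)
        hcon.stronglyMeasurable.stronglyMeasurableAtFilter hcon.continuousAt).const_add χ
    exact (hFd.hasDerivWithinAt).congr (fun τ hτ => ueq τ hτ) (ueq t ht)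

/-- Banach–Steinhaus on a compact interval, composed with `projIcc`. -/
lemma aux_bs_bound {F : ℝ → H →L[ℂ] H} {a b : ℝ} (hab : a ≤ b)
    (hF : ∀ x, ContinuousOn (fun s => F s x) (Icc a b)) :
    ∃ M, ∀ s : ℝ, ‖F (projIcc a b hab s)‖ ≤ M := by
  have hpt : ∀ x : H, ∃ C, ∀ s : Icc a b, ‖F s x‖ ≤ C := by
    intro x
    obtain ⟨C, hC⟩ := isCompact_Icc.exists_bound_of_continuousOn (hF x)
    exact ⟨C, fun s => hC s s.2⟩
  obtain ⟨C', hC'⟩ := banach_steinhaus (g := fun s : Icc a b => F s) hpt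
  exact ⟨C', fun s => hC' (projIcc a b hab s)⟩

lemma aux_proj_cont {F : ℝ → H →L[ℂ] H} {a b : ℝ} (hab : a ≤ b)
    (hF : ∀ x, ContinuousOn (fun s => F s x) (Icc a b)) (x : H) :
    Continuous fun s => F (projIcc a b hab s) x := by
  have h1 : Continuous fun s : Icc a b => F s x :=
    continuousOn_iff_continuous_restrict.mp (hF x)
  exact h1.comp continuous_projIcc

end ODE

lemma aux_interval_integrable_of_bounded {f : ℝ → ℝ} (hf : Measurable f) {M c d : ℝ}
    (h : ∀ s, |f s| ≤ M) : IntervalIntegrable f volume c d := by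
  constructor <;>
  · haveI : IsFiniteMeasure (volume.restrict (Ioc (min c d) (max c d))) := by
      constructor
      rw [Measure.restrict_apply_univ]
      exact measure_Ioc_lt_top
    haveI : IsFiniteMeasure (volume.restrict (Ioc c d)) :=
      ⟨by rw [Measure.restrict_apply_univ]; exact measure_Ioc_lt_top⟩
    haveI : IsFiniteMeasure (volume.restrict (Ioc d c)) :=
      ⟨by rw [Measure.restrict_apply_univ]; exact measure_Ioc_lt_top⟩
    exact ⟨hf.aestronglyMeasurable, HasFiniteIntegral.of_bounded
      (C := M) (ae_of_all _ (fun s => by simpa using h s))⟩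

/-- Let `A, B : I → B(H)` be strongly continuous with `A` pointwise
self-adjoint.  Then the (unique) strong solution `V` of `V'(t) = -i[A(t),V(t)] + B(t)`,
`V(t₀) = V₀`, satisfies `‖V(t)‖ ≤ ‖V₀‖ + ∫_{min(t,t₀)}^{max(t,t₀)} ‖B(s)‖ ds` for all
`t ∈ I`. -/
theorem norm_bound_for_commutator_equation
    {H : Type*} [NormedAddCommGroup H] [InnerProductSpace ℂ H] [CompleteSpace H]
    (I : Set ℝ) (hI : I.OrdConnected) (t₀ : ℝ) (ht₀ : t₀ ∈ I)
    (A B : ℝ → H →L[ℂ] H)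
    (hA : ∀ ψ : H, ContinuousOn (fun t => A t ψ) I)
    (hB : ∀ ψ : H, ContinuousOn (fun t => B t ψ) I)
    (hsa : ∀ t ∈ I, IsSelfAdjoint (A t))
    (V₀ : H →L[ℂ] H) (V : ℝ → H →L[ℂ] H)
    (hV0 : V t₀ = V₀)
    (hVode : ∀ ψ : H, ∀ t ∈ I,
      HasDerivWithinAt (fun s => V s ψ)
        (-(Complex.I • ((A t * V t - V t * A t) ψ)) + B t ψ) I t) :
    ∀ t ∈ I, ‖V t‖ ≤ ‖V₀‖ + ∫ s in min t₀ t..max t₀ t, ‖B s‖ := by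
  intro t₁ ht₁
  set a : ℝ := min t₀ t₁ with ha
  set b : ℝ := max t₀ t₁ with hb
  have hab : a ≤ b := min_le_max
  have huIcc : uIcc t₀ t₁ = Icc a b := rfl
  have hJI : Icc a b ⊆ I := by rw [← huIcc]; exact hI.uIcc_subset ht₀ ht₁
  have ht₀J : t₀ ∈ Icc a b := ⟨min_le_left _ _, le_max_left _ _⟩
  have ht₁J : t₁ ∈ Icc a b := ⟨min_le_right _ _, le_max_right _ _⟩
  have hVcont : ∀ x : H, ContinuousOn (fun s => V s x) I :=
    fun x s hs => (hVode x s hs).continuousWithinAt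
  -- uniform bounds via Banach–Steinhaus
  obtain ⟨MA, hMA⟩ := aux_bs_bound hab (fun x => (hA x).mono hJI)
  obtain ⟨MB, hMB⟩ := aux_bs_bound hab (fun x => (hB x).mono hJI)
  obtain ⟨MV, hMV⟩ := aux_bs_bound hab (fun x => (hVcont x).mono hJI)
  have hMVJ : ∀ s ∈ Icc a b, ‖V s‖ ≤ MV := by
    intro s hs
    have := hMV s
    rwa [projIcc_of_mem hab hs] at this
  -- the generator of the unitary propagator (composed with `projIcc`)
  set G : ℝ → H →L[ℂ] H := fun s => -(Complex.I • A (projIcc a b hab s : ℝ)) with hG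
  have hGapp : ∀ s x, G s x = -(Complex.I • A (projIcc a b hab s : ℝ) x) := by
    intro s x
    simp [hG]
  have hGJ : ∀ s ∈ Icc a b, ∀ x, G s x = -(Complex.I • A s x) := by
    intro s hs x
    rw [hGapp, projIcc_of_mem hab hs]
  have hGc : ∀ x, Continuous fun s => G s x := by
    intro x
    have := ((aux_proj_cont hab (fun y => (hA y).mono hJI) x).const_smul Complex.I).neg
    simp only [hGapp]; exact this
  have hGM : ∀ s, ‖G s‖ ≤ MA := by
    intro s
    rw [hG]
    calc ‖-(Complex.I • A (projIcc a b hab s : ℝ))‖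
        = ‖Complex.I • A (projIcc a b hab s : ℝ)‖ := norm_neg _
      _ = ‖A (projIcc a b hab s : ℝ)‖ := by rw [norm_smul, Complex.norm_I, one_mul]
      _ ≤ MA := hMA s
  -- `B` composed with `projIcc`
  set BB : ℝ → H →L[ℂ] H := fun s => B (projIcc a b hab s : ℝ) with hBB
  have hBBJ : ∀ s ∈ Icc a b, BB s = B s := fun s hs => by
    rw [hBB]; simp only [projIcc_of_mem hab hs]
  have hBBc : ∀ x, Continuous fun s => BB s x :=
    aux_proj_cont hab (fun y => (hB y).mono hJI)
  have hBBint : IntervalIntegrable (fun s => ‖BB s‖) volume a b :=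
    aux_interval_integrable_of_bounded (aux_norm_clm_lsc hBBc).measurable
      (M := MB) (fun s => by rw [abs_of_nonneg (norm_nonneg _)]; exact hMB s)
  set K : ℝ := ‖V₀‖ + ∫ s in a..b, ‖BB s‖ with hK
  have hIBB0 : 0 ≤ ∫ s in a..b, ‖BB s‖ :=
    intervalIntegral.integral_nonneg hab (fun s _ => norm_nonneg _)
  have hK0 : 0 ≤ K := add_nonneg (norm_nonneg _) hIBB0
  -- adjointness
  have hAdj : ∀ s ∈ Icc a b, ∀ x y : H, ⟪A s x, y⟫ = ⟪x, A s y⟫ := by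
    intro s hs x y
    have h1 := hsa s (hJI hs)
    rw [ContinuousLinearMap.isSelfAdjoint_iff'] at h1
    conv_lhs => rw [← h1]
    exact ContinuousLinearMap.adjoint_inner_left _ _ _
  -- norm preservation for solutions of y' = G y
  have np : ∀ y : ℝ → H, (∀ s ∈ Icc a b, HasDerivWithinAt y (G s (y s)) (Icc a b) s) →
      ∀ s ∈ Icc a b, ‖y s‖ = ‖y t₁‖ := by
    intro y hy s hs
    have hq : ∀ τ ∈ Icc a b,
        HasDerivWithinAt (fun σ => ⟪y σ, y σ⟫) ((fun _ => (0:ℂ)) τ) (Icc a b) τ := by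
      intro τ hτ
      have h1 := HasDerivWithinAt.inner ℂ (hy τ hτ) (hy τ hτ)
      have h0 : (⟪y τ, G τ (y τ)⟫ + ⟪G τ (y τ), y τ⟫ : ℂ) = 0 := by
        rw [hGJ τ hτ]
        rw [inner_neg_right, inner_neg_left, inner_smul_right, inner_smul_left,
          hAdj τ hτ (y τ) (y τ), Complex.conj_I]
        ring
      rw [h0] at h1
      exact h1
    have h2 := aux_ftc_icc' hq continuousOn_const t₁ ht₁J s hs
    rw [intervalIntegral.integral_zero, sub_eq_zero] at h2
    have h4 : ‖y s‖^2 = ‖y t₁‖^2 := by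
      rw [← inner_self_eq_norm_sq (𝕜 := ℂ), ← inner_self_eq_norm_sq (𝕜 := ℂ), h2]
    calc ‖y s‖ = √(‖y s‖^2) := (Real.sqrt_sq (norm_nonneg _)).symm
      _ = √(‖y t₁‖^2) := by rw [h4]
      _ = ‖y t₁‖ := Real.sqrt_sq (norm_nonneg _)
  -- the key inner-product estimate
  have key : ∀ φ₁ ψ₁ : H, ‖(⟪φ₁, V t₁ ψ₁⟫ : ℂ)‖ ≤ K * (‖φ₁‖ * ‖ψ₁‖) := by
    intro φ₁ ψ₁
    obtain ⟨φ, φcont, φt₁, φder⟩ := aux_ode_exists hab G hGc hGM ht₁J φ₁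
    obtain ⟨ψ, ψcont, ψt₁, ψder⟩ := aux_ode_exists hab G hGc hGM ht₁J ψ₁
    have npφ := np φ φder
    have npψ := np ψ ψder
    -- derivative of σ ↦ V σ (ψ σ)
    have hw : ∀ τ ∈ Icc a b, HasDerivWithinAt (fun σ => V σ (ψ σ))
        ((-(Complex.I • ((A τ * V τ - V τ * A τ) (ψ τ))) + B τ (ψ τ)) + V τ (G τ (ψ τ)))
        (Icc a b) τ := by
      intro τ hτ
      refine aux_strong_clm_deriv (C := MV) hMVJ ?_ ?_ (ψder τ hτ)
      · exact (hVode (ψ τ) τ (hJI hτ)).mono hJI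
      · exact ((hVcont (G τ (ψ τ))).mono hJI) τ hτ
    -- derivative of the pairing
    set g : ℝ → ℂ := fun σ => ⟪φ σ, BB σ (ψ σ)⟫ with hg
    have hh : ∀ τ ∈ Icc a b,
        HasDerivWithinAt (fun σ => ⟪φ σ, V σ (ψ σ)⟫) (g τ) (Icc a b) τ := by
      intro τ hτ
      have h3 := HasDerivWithinAt.inner ℂ (φder τ hτ) (hw τ hτ)
      have heq : (⟪φ τ, (-(Complex.I • ((A τ * V τ - V τ * A τ) (ψ τ))) + B τ (ψ τ))
            + V τ (G τ (ψ τ))⟫ + ⟪G τ (φ τ), V τ (ψ τ)⟫ : ℂ) = g τ := by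
        have e1 : G τ (φ τ) = -(Complex.I • A τ (φ τ)) := hGJ τ hτ _
        have e2 : G τ (ψ τ) = -(Complex.I • A τ (ψ τ)) := hGJ τ hτ _
        have hgτ : g τ = ⟪φ τ, B τ (ψ τ)⟫ := by
          show (⟪φ τ, BB τ (ψ τ)⟫ : ℂ) = _
          rw [hBBJ τ hτ]
        rw [hgτ, e1, e2]
        simp only [ContinuousLinearMap.sub_apply, ContinuousLinearMap.mul_apply,
          map_neg, _root_.map_smul,
          inner_add_right, inner_sub_right, inner_neg_left, inner_neg_right,
          inner_smul_left, inner_smul_right, Complex.conj_I,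
          hAdj τ hτ (φ τ) (V τ (ψ τ))]
        ring
      rw [heq] at h3
      exact h3
    have hgcont : Continuous g :=
      Continuous.inner φcont (aux_joint_cont hBBc hMB ψcont)
    have heq2 := aux_ftc_icc' hh hgcont.continuousOn t₀ ht₀J t₁ ht₁J
    -- bound the integral
    have hIβ : IntervalIntegrable (fun s => ‖BB s‖ * (‖φ₁‖ * ‖ψ₁‖)) volume t₀ t₁ := by
      refine aux_interval_integrable_of_bounded
        (((aux_norm_clm_lsc hBBc).measurable).mul_const _) (M := MB * (‖φ₁‖ * ‖ψ₁‖)) ?_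
      intro s
      rw [abs_of_nonneg (mul_nonneg (norm_nonneg _)
        (mul_nonneg (norm_nonneg _) (norm_nonneg _)))]
      exact mul_le_mul_of_nonneg_right (hMB s)
        (mul_nonneg (norm_nonneg _) (norm_nonneg _))
    have hb1 : ‖∫ τ in t₀..t₁, g τ‖ ≤ |∫ τ in t₀..t₁, ‖BB τ‖ * (‖φ₁‖ * ‖ψ₁‖)| := by
      refine intervalIntegral.norm_integral_le_abs_of_norm_le ?_ hIβ
      refine ae_restrict_of_forall_mem measurableSet_uIoc ?_
      intro τ hτ
      have hτJ : τ ∈ Icc a b := (uIoc_subset_uIcc.trans (uIcc_subset_Icc ht₀J ht₁J)) hτ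
      calc ‖g τ‖ ≤ ‖φ τ‖ * ‖BB τ (ψ τ)‖ := norm_inner_le_norm _ _
        _ ≤ ‖φ τ‖ * (‖BB τ‖ * ‖ψ τ‖) := by
            gcongr
            exact (BB τ).le_opNorm _
        _ = ‖BB τ‖ * (‖φ₁‖ * ‖ψ₁‖) := by
            rw [npφ τ hτJ, npψ τ hτJ, φt₁, ψt₁]; ring
    have hb2 : |∫ τ in t₀..t₁, ‖BB τ‖ * (‖φ₁‖ * ‖ψ₁‖)|
        = (∫ s in a..b, ‖BB s‖) * (‖φ₁‖ * ‖ψ₁‖) := by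
      have habs3 : |∫ τ in t₀..t₁, ‖BB τ‖| = ∫ s in a..b, ‖BB s‖ := by
        rcases le_total t₀ t₁ with h | h
        · rw [ha, hb, min_eq_left h, max_eq_right h]
          exact abs_of_nonneg (intervalIntegral.integral_nonneg h (fun _ _ => norm_nonneg _))
        · rw [ha, hb, min_eq_right h, max_eq_left h, intervalIntegral.integral_symm, abs_neg]
          exact abs_of_nonneg (intervalIntegral.integral_nonneg h (fun _ _ => norm_nonneg _))
      rw [intervalIntegral.integral_mul_const, abs_mul, habs3,
        abs_of_nonneg (mul_nonneg (norm_nonneg _) (norm_nonneg _))]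
    -- assemble
    have hht₁ : (⟪φ t₁, V t₁ (ψ t₁)⟫ : ℂ) = ⟪φ₁, V t₁ ψ₁⟫ := by rw [φt₁, ψt₁]
    have hht₀bound : ‖(⟪φ t₀, V t₀ (ψ t₀)⟫ : ℂ)‖ ≤ ‖V₀‖ * (‖φ₁‖ * ‖ψ₁‖) := by
      calc ‖(⟪φ t₀, V t₀ (ψ t₀)⟫ : ℂ)‖ ≤ ‖φ t₀‖ * ‖V t₀ (ψ t₀)‖ := norm_inner_le_norm _ _
        _ ≤ ‖φ t₀‖ * (‖V t₀‖ * ‖ψ t₀‖) := by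
            gcongr
            exact (V t₀).le_opNorm _
        _ = ‖V₀‖ * (‖φ₁‖ * ‖ψ₁‖) := by
            rw [npφ t₀ ht₀J, npψ t₀ ht₀J, φt₁, ψt₁, hV0]; ring
    calc ‖(⟪φ₁, V t₁ ψ₁⟫ : ℂ)‖
        = ‖(⟪φ t₀, V t₀ (ψ t₀)⟫ : ℂ) + ((⟪φ t₁, V t₁ (ψ t₁)⟫ : ℂ) - ⟪φ t₀, V t₀ (ψ t₀)⟫)‖ := by
          rw [← hht₁]; congr 1; ring
      _ ≤ ‖(⟪φ t₀, V t₀ (ψ t₀)⟫ : ℂ)‖ + ‖(⟪φ t₁, V t₁ (ψ t₁)⟫ : ℂ) - ⟪φ t₀, V t₀ (ψ t₀)⟫‖ :=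
          norm_add_le _ _
      _ ≤ ‖V₀‖ * (‖φ₁‖ * ‖ψ₁‖) + (∫ s in a..b, ‖BB s‖) * (‖φ₁‖ * ‖ψ₁‖) := by
          refine add_le_add hht₀bound ?_
          rw [heq2]
          exact hb1.trans (le_of_eq hb2)
      _ = K * (‖φ₁‖ * ‖ψ₁‖) := by rw [hK]; ring
  -- conclude the operator norm bound
  have hfinal : ‖V t₁‖ ≤ K := by
    refine (V t₁).opNorm_le_bound hK0 fun x => ?_
    by_cases hx : ‖V t₁ x‖ = 0
    · rw [hx]; positivity
    · have hpos : 0 < ‖V t₁ x‖ := lt_of_le_of_ne (norm_nonneg _) (Ne.symm hx)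
      have h1 := key (V t₁ x) x
      have h2 : ‖V t₁ x‖^2 ≤ ‖(⟪V t₁ x, V t₁ x⟫ : ℂ)‖ := by
        rw [← inner_self_eq_norm_sq (𝕜 := ℂ)]
        exact RCLike.re_le_norm _
      nlinarith [h1, h2, hpos]
  have hBcongr : ∫ s in a..b, ‖BB s‖ = ∫ s in min t₀ t₁..max t₀ t₁, ‖B s‖ := by
    refine intervalIntegral.integral_congr ?_
    intro s hs
    have hsJ : s ∈ Icc a b := by rwa [uIcc_of_le hab] at hs
    simp only [hBBJ s hsJ]
  calc ‖V t₁‖ ≤ K := hfinal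
    _ = ‖V₀‖ + ∫ s in min t₀ t₁..max t₀ t₁, ‖B s‖ := by rw [hK, hBcongr]
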